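/- arXiv:1301.2892 — 2 statements merged into one kernel-verified Lean document; each statement's English description precedes it below -/
import Mathlib

section
/- Let m ≥ 1, n ≥ 2 and let (a,u), (b,v) ∈ G = ℤ^m × F_n. There exists an automorphism Ψ of G with Ψ(a,u) = (b,v) if and only if both of the following hold: (1) there exists an automorphism φ of F_n with φ(u) = v, and (2) there exist a matrix Q ∈ GL(m,ℤ) and an n×m integer matrix P with aQ + ūP = b. -/
open Matrix

/-- The abelianization vector (vector of exponent sums of the generators)
of an element of the free group `F_n`. -/
def abVec {n : ℕ} (u : FreeGroup (Fin n)) : Fin n → ℤ :=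
  Multiplicative.toAdd ((FreeGroup.lift fun i => Multiplicative.ofAdd (Pi.single i (1 : ℤ))) u)

/-- The free-abelian times free group `G = ℤ^m × F_n`. -/
abbrev GFab (m n : ℕ) := Multiplicative (Fin m → ℤ) × FreeGroup (Fin n)

section Aux

variable {α : Type*} [DecidableEq α]

/-- the no-cancellation relation between adjacent letters of a reduced word -/
def NoC (a b : α × Bool) : Prop := ¬(a.1 = b.1 ∧ a.2 = !b.2)

lemma chain'_reduce (L : List (α × Bool)) : List.Chain' NoC (FreeGroup.reduce L) := by
  induction L with
  | nil => exact List.isChain_nil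
  | cons x L ih =>
    rw [FreeGroup.reduce.cons]
    cases h : FreeGroup.reduce L with
    | nil => exact List.isChain_singleton _
    | cons hd tl =>
      rw [h] at ih
      dsimp only
      by_cases hc : x.1 = hd.1 ∧ x.2 = !hd.2
      · rw [if_pos hc]; exact ih.tail
      · rw [if_neg hc]; exact List.isChain_cons_cons.mpr ⟨hc, ih⟩

lemma reduce_eq_self {L : List (α × Bool)} (h : List.Chain' NoC L) :
    FreeGroup.reduce L = L := by
  induction L with
  | nil => rfl
  | cons x L ih =>
    rw [FreeGroup.reduce.cons, ih h.tail]
    cases L with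
    | nil => rfl
    | cons hd tl =>
      dsimp only
      rw [if_neg (List.isChain_cons_cons.mp h).1]

lemma eq_one_of_comm_gen {n : ℕ} (hn : 2 ≤ n) (w : FreeGroup (Fin n))
    (h : ∀ j : Fin n, w * FreeGroup.of j = FreeGroup.of j * w) : w = 1 := by
  by_contra hw
  set L := w.toWord with hLdef
  have hL : L ≠ [] := fun h0 => hw (FreeGroup.toWord_eq_nil_iff.mp h0)
  have hredL : FreeGroup.reduce L = L := w.reduce_toWord
  set x := L.getLast hL with hxdef
  have : Nontrivial (Fin n) := Fin.nontrivial_iff_two_le.mpr hn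
  obtain ⟨j, hj⟩ := exists_ne x.1
  have hconj : w * FreeGroup.of j * w⁻¹ = FreeGroup.of j := by
    rw [h j]; group
  have hw1 : w = FreeGroup.mk L := FreeGroup.mk_toWord.symm
  have hwinv : w⁻¹ = FreeGroup.mk (FreeGroup.invRev L) := by
    rw [hw1, FreeGroup.inv_mk]
  have hofj : FreeGroup.of j = FreeGroup.mk [(j, true)] := by
    conv_lhs => rw [← FreeGroup.mk_toWord (x := FreeGroup.of j)]
    rw [FreeGroup.toWord_of]
  have hbig : FreeGroup.mk (L ++ (j, true) :: FreeGroup.invRev L) = FreeGroup.mk [(j, true)] := by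
    rw [← hofj, ← hconj]
    conv_rhs => rw [hwinv, hw1, hofj]
    rw [FreeGroup.mul_mk, FreeGroup.mul_mk]
    simp
  have hred2 : FreeGroup.reduce (L ++ (j, true) :: FreeGroup.invRev L) = [(j, true)] := by
    have := congrArg FreeGroup.toWord hbig
    simpa [FreeGroup.toWord_mk, FreeGroup.reduce_singleton] using this
  have hchL : List.Chain' NoC L := hredL ▸ chain'_reduce L
  have hchinv : List.Chain' NoC (FreeGroup.invRev L) := by
    have h2 : FreeGroup.reduce (FreeGroup.invRev L) = FreeGroup.invRev L := by
      rw [FreeGroup.reduce_invRev, hredL]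
    exact h2 ▸ chain'_reduce _
  have hlast : L.getLast? = some x := List.getLast?_eq_getLast hL
  have hheadinv : (FreeGroup.invRev L).head? = some (x.1, !x.2) := by
    unfold FreeGroup.invRev
    rw [List.head?_reverse, List.getLast?_map, hlast]
    rfl
  have hch : List.Chain' NoC (L ++ (j, true) :: FreeGroup.invRev L) := by
    refine List.isChain_append.mpr ⟨hchL, ?_, ?_⟩
    · refine List.isChain_cons.mpr ⟨?_, hchinv⟩
      intro y hy
      rw [hheadinv, Option.mem_def, Option.some_inj] at hy
      subst hy
      intro hc
      have h1 := hc.1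
      first | exact hj h1 | exact hj h1.symm
    · intro p hp q hq
      rw [hlast, Option.mem_def, Option.some_inj] at hp
      rw [List.head?_cons, Option.mem_def, Option.some_inj] at hq
      subst hp; subst hq
      intro hc
      have h1 := hc.1
      first | exact hj h1 | exact hj h1.symm
  rw [reduce_eq_self hch] at hred2
  have hlen := congrArg List.length hred2
  simp only [List.length_append, List.length_cons, List.length_nil, FreeGroup.invRev_length] at hlen
  have hL0 : L.length = 0 := by omega
  exact hL (List.length_eq_zero_iff.mp hL0)

@[simp] lemma abVec_one {n : ℕ} : abVec (1 : FreeGroup (Fin n)) = 0 := by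
  simp [abVec]

@[simp] lemma abVec_mul {n : ℕ} (g h : FreeGroup (Fin n)) :
    abVec (g * h) = abVec g + abVec h := by
  simp [abVec]

@[simp] lemma abVec_inv {n : ℕ} (g : FreeGroup (Fin n)) : abVec g⁻¹ = -abVec g := by
  simp [abVec]

@[simp] lemma abVec_of {n : ℕ} (i : Fin n) : abVec (FreeGroup.of i) = Pi.single i 1 := by
  simp [abVec]

lemma single_one_vecMul' {k m : ℕ} (M : Matrix (Fin k) (Fin m) ℤ) (i : Fin k) :
    Pi.single i (1 : ℤ) ᵥ* M = M i := by
  funext j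
  simp [Matrix.vecMul, single_dotProduct]

lemma vecMul_of_addHom {m : ℕ} (f : (Fin m → ℤ) →+ (Fin m → ℤ)) (x : Fin m → ℤ) :
    x ᵥ* (Matrix.of fun i j => f (Pi.single i 1) j) = f x := by
  conv_rhs => rw [← Finset.univ_sum_single x, map_sum]
  funext j
  simp only [Matrix.vecMul, dotProduct, Matrix.of_apply, Finset.sum_apply]
  refine Finset.sum_congr rfl fun i _ => ?_
  have h1 : (Pi.single i (x i) : Fin m → ℤ) = x i • (Pi.single i (1 : ℤ) : Fin m → ℤ) := by
    funext k
    by_cases hk : k = i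
    · subst hk; simp
    · simp [Pi.single_eq_of_ne hk]
  rw [h1, map_zsmul]
  simp [smul_eq_mul]

end Aux

/-- Whitehead problem characterization for automorphisms of `ℤ^m × F_n` (m ≥ 1, n ≥ 2):
some automorphism sends `(a,u)` to `(b,v)` iff some automorphism of `F_n` sends u to v
and there exist `Q ∈ GL(m,ℤ)` and an integer matrix P with `aQ + ūP = b`. -/
theorem whitehead_aut (m n : ℕ) (hm : 1 ≤ m) (hn : 2 ≤ n)
    (a b : Fin m → ℤ) (u v : FreeGroup (Fin n)) :
    (∃ Ψ : GFab m n →* GFab m n, Function.Bijective Ψ ∧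
        Ψ (Multiplicative.ofAdd a, u) = (Multiplicative.ofAdd b, v)) ↔
    ((∃ φ : FreeGroup (Fin n) →* FreeGroup (Fin n), Function.Bijective φ ∧ φ u = v) ∧
     (∃ (Q : Matrix (Fin m) (Fin m) ℤ) (P : Matrix (Fin n) (Fin m) ℤ),
        (Q.det = 1 ∨ Q.det = -1) ∧ a ᵥ* Q + abVec u ᵥ* P = b)) := by
  constructor
  · rintro ⟨Ψ, hbij, hΨ⟩
    set e : GFab m n ≃* GFab m n := MulEquiv.ofBijective Ψ hbij with he
    have heapp : ∀ p, e p = Ψ p := fun p => rfl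
    -- centrality transfers
    have hcent : ∀ p : GFab m n, (∀ q, p * q = q * p) → (∀ q, Ψ p * q = q * Ψ p) := by
      intro p hp q
      obtain ⟨z, rfl⟩ := hbij.2 q
      rw [← _root_.map_mul, ← _root_.map_mul, hp]
    have hcent' : ∀ p : GFab m n, (∀ q, Ψ p * q = q * Ψ p) → (∀ q, p * q = q * p) := by
      intro p hp q
      apply hbij.1
      rw [_root_.map_mul, _root_.map_mul, hp]
    have hGcent : ∀ p : GFab m n, (∀ q, p * q = q * p) ↔ p.2 = 1 := by
      intro p
      constructor
      · intro hp
        apply eq_one_of_comm_gen hn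
        intro j
        have h2 := congrArg Prod.snd (hp (1, FreeGroup.of j))
        simpa using h2
      · intro h2 q
        refine Prod.ext (mul_comm _ _) ?_
        simp [h2]
    have hsnd1 : ∀ x : Multiplicative (Fin m → ℤ), (Ψ (x, 1)).2 = 1 := by
      intro x
      exact (hGcent _).1 (hcent _ ((hGcent (x, 1)).2 rfl))
    have hsnd1' : ∀ x : Multiplicative (Fin m → ℤ), (e.symm (x, 1)).2 = 1 := by
      intro x
      apply (hGcent _).1
      apply hcent'
      intro q
      have : Ψ (e.symm (x, 1)) = (x, 1) := e.apply_symm_apply (x, 1)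
      rw [this]
      exact (hGcent ((x, 1) : GFab m n)).2 rfl q
    -- the components
    set τh : (Fin m → ℤ) →+ (Fin m → ℤ) :=
      AddMonoidHom.mk' (fun x => Multiplicative.toAdd (Ψ (Multiplicative.ofAdd x, 1)).1)
        (by
          intro x y
          have : ((Multiplicative.ofAdd (x + y) : Multiplicative (Fin m → ℤ)), (1 : FreeGroup (Fin n)))
              = ((Multiplicative.ofAdd x, 1) : GFab m n) * (Multiplicative.ofAdd y, 1) := by
            simp [Prod.mk_mul_mk, ← ofAdd_add]
          rw [this, _root_.map_mul]
          simp [Prod.fst_mul]) with hτh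
    set τh' : (Fin m → ℤ) →+ (Fin m → ℤ) :=
      AddMonoidHom.mk' (fun x => Multiplicative.toAdd (e.symm (Multiplicative.ofAdd x, 1)).1)
        (by
          intro x y
          have : ((Multiplicative.ofAdd (x + y) : Multiplicative (Fin m → ℤ)), (1 : FreeGroup (Fin n)))
              = ((Multiplicative.ofAdd x, 1) : GFab m n) * (Multiplicative.ofAdd y, 1) := by
            simp [Prod.mk_mul_mk, ← ofAdd_add]
          rw [this, _root_.map_mul]
          simp [Prod.fst_mul]) with hτh'
    have hΨx1 : ∀ x : Fin m → ℤ,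
        Ψ (Multiplicative.ofAdd x, 1) = (Multiplicative.ofAdd (τh x), 1) := by
      intro x
      refine Prod.ext ?_ (hsnd1 _)
      simp [hτh]
    have hex1 : ∀ x : Fin m → ℤ,
        e.symm (Multiplicative.ofAdd x, 1) = (Multiplicative.ofAdd (τh' x), 1) := by
      intro x
      refine Prod.ext ?_ (hsnd1' _)
      simp [hτh']
    have hττ' : ∀ y, τh (τh' y) = y := by
      intro y
      have h1 : Ψ (e.symm (Multiplicative.ofAdd y, 1)) = (Multiplicative.ofAdd y, 1) :=
        e.apply_symm_apply _
      rw [hex1 y, hΨx1 (τh' y)] at h1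
      have := congrArg Prod.fst h1
      simpa using this
    -- σ and φ
    set σ : FreeGroup (Fin n) → (Fin m → ℤ) :=
      fun g => Multiplicative.toAdd (Ψ (1, g)).1 with hσ
    set φ : FreeGroup (Fin n) →* FreeGroup (Fin n) :=
      (MonoidHom.snd _ _).comp (Ψ.comp (MonoidHom.inr _ _)) with hφdef
    have hφapp : ∀ g, φ g = (Ψ (1, g)).2 := fun g => rfl
    have hdecomp : ∀ (x : Fin m → ℤ) (g : FreeGroup (Fin n)),
        Ψ (Multiplicative.ofAdd x, g)
          = (Multiplicative.ofAdd (τh x + σ g), φ g) := by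
      intro x g
      have hsplit : ((Multiplicative.ofAdd x : Multiplicative (Fin m → ℤ)), g)
          = ((Multiplicative.ofAdd x, 1) : GFab m n) * (1, g) := by
        simp [Prod.mk_mul_mk]
      rw [hsplit, _root_.map_mul, hΨx1]
      refine Prod.ext ?_ ?_
      · simp [Prod.fst_mul, hσ, ofAdd_add]
      · simp [Prod.snd_mul, hφapp]
    -- φ is bijective
    have hφinj : Function.Injective φ := by
      intro g g' hgg'
      have h1 : φ (g * g'⁻¹) = 1 := by
        rw [_root_.map_mul, _root_.map_inv, hgg', mul_inv_cancel]
      -- centrality argument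
      have hc1 : (Ψ (1, g * g'⁻¹)).2 = 1 := by
        rw [← hφapp]; exact h1
      have hc2 : (1, g * g'⁻¹) = ((1, 1) : GFab m n) := by
        refine Prod.ext rfl ?_
        exact (hGcent ((1, g * g'⁻¹) : GFab m n)).1
          (hcent' _ (fun q => ((hGcent (Ψ (1, g * g'⁻¹))).2 hc1) q))
      have h3 : g * g'⁻¹ = 1 := congrArg Prod.snd hc2
      have := mul_inv_eq_one.mp h3
      exact this
    have hφsurj : Function.Surjective φ := by
      intro w
      obtain ⟨⟨x, g⟩, hq⟩ := hbij.2 ((1 : Multiplicative (Fin m → ℤ)), w)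
      refine ⟨g, ?_⟩
      have hx : x = Multiplicative.ofAdd (Multiplicative.toAdd x) := rfl
      rw [hx, hdecomp] at hq
      have := congrArg Prod.snd hq
      simpa using this
    -- matrices
    set Q : Matrix (Fin m) (Fin m) ℤ := Matrix.of fun i j => τh (Pi.single i 1) j with hQdef
    set Q' : Matrix (Fin m) (Fin m) ℤ := Matrix.of fun i j => τh' (Pi.single i 1) j with hQ'def
    have hQ : ∀ x, x ᵥ* Q = τh x := fun x => vecMul_of_addHom τh x
    have hQ' : ∀ x, x ᵥ* Q' = τh' x := fun x => vecMul_of_addHom τh' x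
    have hQQ' : Q' * Q = 1 := by
      ext i j
      have h1 : Pi.single i (1 : ℤ) ᵥ* (Q' * Q) = Pi.single i 1 := by
        rw [← Matrix.vecMul_vecMul, hQ', hQ, hττ']
      have h2 := congrFun h1 j
      rw [single_one_vecMul'] at h2
      rw [h2, Pi.single_apply, Matrix.one_apply]
      by_cases hij : i = j
      · subst hij; simp
      · rw [if_neg (Ne.symm hij), if_neg hij]
    have hdetQ : Q.det = 1 ∨ Q.det = -1 := by
      have : Q'.det * Q.det = 1 := by rw [← Matrix.det_mul, hQQ', Matrix.det_one]
      have hu : IsUnit Q.det := IsUnit.of_mul_eq_one _ (by rw [mul_comm] at this; exact this)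
      exact Int.isUnit_iff.mp hu
    set P : Matrix (Fin n) (Fin m) ℤ := Matrix.of fun i j => σ (FreeGroup.of i) j with hPdef
    have hσone : σ 1 = 0 := by simp [hσ, ← Prod.one_eq_mk]
    have hσmul : ∀ g h, σ (g * h) = σ g + σ h := by
      intro g h
      have hsp : ((1 : Multiplicative (Fin m → ℤ)), g * h) = ((1, g) : GFab m n) * (1, h) := by
        refine Prod.ext ?_ rfl
        simp
      show Multiplicative.toAdd (Ψ (1, g * h)).1 = _
      rw [hsp, _root_.map_mul, Prod.fst_mul, toAdd_mul]
    have hσinv : ∀ g, σ g⁻¹ = -σ g := by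
      intro g
      have h0 := hσmul g g⁻¹
      rw [mul_inv_cancel, hσone] at h0
      rw [eq_neg_iff_add_eq_zero, add_comm]
      exact h0.symm
    have hP : ∀ g, σ g = abVec g ᵥ* P := by
      intro g
      induction g using FreeGroup.induction_on with
      | C1 => simp [hσone, Matrix.zero_vecMul]
      | of i =>
        show σ (FreeGroup.of i) = abVec (FreeGroup.of i) ᵥ* P
        rw [abVec_of, single_one_vecMul']
        rfl
      | inv_of i ih =>
        show σ (FreeGroup.of i)⁻¹ = abVec (FreeGroup.of i)⁻¹ ᵥ* P
        rw [hσinv, abVec_inv, Matrix.neg_vecMul]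
        rw [show σ (FreeGroup.of i) = abVec (FreeGroup.of i) ᵥ* P from ih]
      | mul g h ihg ihh => rw [hσmul, abVec_mul, Matrix.add_vecMul, ihg, ihh]
    -- conclude
    have hfinal := hdecomp a u
    rw [hΨ] at hfinal
    have hfst := congrArg Prod.fst hfinal
    have hsnd := congrArg Prod.snd hfinal
    simp only at hfst hsnd
    refine ⟨⟨φ, ⟨hφinj, hφsurj⟩, hsnd.symm⟩, Q, P, hdetQ, ?_⟩
    rw [hQ, ← hP]
    have : τh a + σ u = b := by
      have := congrArg Multiplicative.toAdd hfst
      simpa using this.symm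
    exact this
  · rintro ⟨⟨φ, hφ, hφu⟩, Q, P, hdet, hab⟩
    have hu : IsUnit Q.det := by rcases hdet with h | h <;> rw [h] <;> simp [Int.isUnit_iff]
    haveI : Invertible Q := Q.invertibleOfIsUnitDet hu
    set eφ := Equiv.ofBijective φ hφ with heφ
    set Ψ : GFab m n →* GFab m n :=
      { toFun := fun p =>
          (Multiplicative.ofAdd (Multiplicative.toAdd p.1 ᵥ* Q + abVec p.2 ᵥ* P), φ p.2),
        map_one' := by
          simp [Matrix.zero_vecMul]
        map_mul' := by
          intro p q
          refine Prod.ext ?_ (_root_.map_mul φ _ _)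
          simp only [Prod.fst_mul, Prod.snd_mul, toAdd_mul, abVec_mul, Matrix.add_vecMul,
            ← ofAdd_add]
          congr 1
          abel } with hΨdef
    refine ⟨Ψ, ?_, ?_⟩
    · rw [Function.bijective_iff_has_inverse]
      refine ⟨fun p =>
        (Multiplicative.ofAdd ((Multiplicative.toAdd p.1 - abVec (eφ.symm p.2) ᵥ* P) ᵥ* ⅟Q),
          eφ.symm p.2), ?_, ?_⟩
      · intro p
        have hsymm : eφ.symm (φ p.2) = p.2 := eφ.symm_apply_apply p.2
        refine Prod.ext ?_ hsymm
        simp only [hΨdef, MonoidHom.coe_mk, OneHom.coe_mk, toAdd_ofAdd, hsymm]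
        rw [add_sub_cancel_right, Matrix.vecMul_vecMul, mul_invOf_self, Matrix.vecMul_one]
        simp
      · intro p
        have happ : φ (eφ.symm p.2) = p.2 := eφ.apply_symm_apply p.2
        refine Prod.ext ?_ happ
        simp only [hΨdef, MonoidHom.coe_mk, OneHom.coe_mk, toAdd_ofAdd, happ]
        rw [Matrix.vecMul_vecMul, invOf_mul_self, Matrix.vecMul_one, sub_add_cancel]
        simp
    · refine Prod.ext ?_ hφu
      simp only [hΨdef, MonoidHom.coe_mk, OneHom.coe_mk, toAdd_ofAdd]
      rw [hab]
end

section
/- Let m ≥ 1 and let a, b ∈ ℤ^m be row vectors. There exists an m×m integer matrix Q with det(Q) ≠ 0 and aQ = b if and only if either a = 0 and b = 0, or a ≠ 0, b ≠ 0 and gcd(a₁,…,a_m) divides bᵢ for every i = 1,…,m. -/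
open Matrix

lemma finset_gcd_bezout {ι : Type*} [DecidableEq ι] (s : Finset ι) (a : ι → ℤ) :
    ∃ u : ι → ℤ, ∑ i ∈ s, a i * u i = s.gcd a := by
  induction s using Finset.induction_on with
  | empty => exact ⟨0, by simp⟩
  | @insert i s hi ih =>
    obtain ⟨u, hu⟩ := ih
    set g := s.gcd a with hg
    refine ⟨fun k => if k = i then Int.gcdA (a i) g else Int.gcdB (a i) g * u k, ?_⟩
    rw [Finset.sum_insert hi, Finset.gcd_insert]
    simp only [if_true, eq_self_iff_true, ← hg]
    have h2 : ∑ k ∈ s, a k * (if k = i then Int.gcdA (a i) g else Int.gcdB (a i) g * u k)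
        = Int.gcdB (a i) g * g := by
      rw [← hu, Finset.mul_sum]
      refine Finset.sum_congr rfl fun k hk => ?_
      rw [if_neg (by rintro rfl; exact hi hk)]; ring
    rw [h2, ← Int.coe_gcd, Int.gcd_eq_gcd_ab]
    ring

/-- For `a, b ∈ ℤ^m` (m ≥ 1): there is an integer matrix Q with `det Q ≠ 0` and
`aQ = b` iff either `a = 0 ∧ b = 0`, or `a ≠ 0`, `b ≠ 0` and `gcd(a)` divides every
entry of b. -/
theorem nonsing_matrix_orbit_iff (m : ℕ) (hm : 1 ≤ m) (a b : Fin m → ℤ) :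
    (∃ Q : Matrix (Fin m) (Fin m) ℤ, Q.det ≠ 0 ∧ a ᵥ* Q = b) ↔
    ((a = 0 ∧ b = 0) ∨ (a ≠ 0 ∧ b ≠ 0 ∧ ∀ i, Finset.univ.gcd a ∣ b i)) := by
  constructor
  · rintro ⟨Q, hdet, rfl⟩
    by_cases ha : a = 0
    · left; exact ⟨ha, by simp [ha]⟩
    · right
      refine ⟨ha, ?_, ?_⟩
      · intro hb
        apply ha
        have h1 : a ᵥ* (Q * Q.adjugate) = 0 := by
          rw [← Matrix.vecMul_vecMul, hb, Matrix.zero_vecMul]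
        rw [Matrix.mul_adjugate] at h1
        funext i
        have h2 := congrFun h1 i
        simp only [Matrix.vecMul, dotProduct, Matrix.smul_apply, Matrix.one_apply,
          smul_eq_mul, mul_ite, mul_one, mul_zero, Finset.sum_ite_eq', Finset.mem_univ,
          if_true, Pi.zero_apply] at h2
        simp only [Pi.zero_apply]
        exact (mul_eq_zero.mp h2).resolve_right hdet
      · intro i
        have : (a ᵥ* Q) i = ∑ j, a j * Q j i := by
          simp [Matrix.vecMul, dotProduct]
        rw [this]
        exact Finset.dvd_sum fun j _ =>
          Dvd.dvd.mul_right (Finset.gcd_dvd (Finset.mem_univ j)) _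
  · rintro (⟨rfl, rfl⟩ | ⟨ha, hb, hdvd⟩)
    · exact ⟨1, by simp, by simp⟩
    · set g : ℤ := Finset.univ.gcd a with hgdef
      have hg : g ≠ 0 := by
        intro h
        apply ha
        funext i
        have := Finset.gcd_eq_zero_iff.mp (hgdef ▸ h) i (Finset.mem_univ i)
        simpa using this
      set c : Fin m → ℤ := fun i => b i / g with hcdef
      have hc : ∀ i, g * c i = b i := fun i => Int.mul_ediv_cancel' (hdvd i)
      have hcne : ∃ j, c j ≠ 0 := by
        by_contra h
        push_neg at h
        apply hb
        funext i
        rw [← hc i, h i, mul_zero]; rfl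
      obtain ⟨u₀, hu₀⟩ := finset_gcd_bezout Finset.univ a
      have key : ∃ u : Fin m → ℤ, (∑ i, a i * u i = g) ∧ (∑ i, c i * u i ≠ 0) := by
        by_cases h : ∑ i, c i * u₀ i = 0
        · obtain ⟨j, hj⟩ := hcne
          have expand : ∀ x : Fin m → ℤ,
              ∑ k, x k * (u₀ k + (g * (if k = j then 1 else 0) - a j * u₀ k))
              = (∑ k, x k * u₀ k) + g * x j - a j * ∑ k, x k * u₀ k := by
            intro x
            have e : ∀ k, x k * (u₀ k + (g * (if k = j then 1 else 0) - a j * u₀ k))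
                = x k * u₀ k + ((if k = j then g * x k else 0) - a j * (x k * u₀ k)) := by
              intro k
              by_cases hk : k = j <;> simp [hk] <;> ring
            simp only [e, Finset.sum_add_distrib, Finset.sum_sub_distrib, ← Finset.mul_sum,
              Finset.sum_ite_eq' Finset.univ j, Finset.mem_univ, if_true]
            ring
          refine ⟨fun k => u₀ k + (g * (if k = j then 1 else 0) - a j * u₀ k), ?_, ?_⟩
          · rw [expand a, hu₀, ← hgdef]; ring
          · rw [expand c, h]
            simpa using mul_ne_zero hg hj
        · exact ⟨u₀, by rw [hu₀, hgdef], h⟩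
      obtain ⟨u, hu, hs⟩ := key
      set s : ℤ := ∑ i, c i * u i with hsdef
      refine ⟨(g : ℤ) • (1 : Matrix (Fin m) (Fin m) ℤ) + Matrix.vecMulVec u (c - a), ?_, ?_⟩
      · -- determinant nonzero
        have hmap : (((g : ℤ) • (1 : Matrix (Fin m) (Fin m) ℤ)
              + Matrix.vecMulVec u (c - a)).map (Int.cast : ℤ → ℚ))
            = (g : ℚ) • (1 + Matrix.vecMulVec (fun j => (u j : ℚ))
                (fun i => (g : ℚ)⁻¹ * ((c i : ℚ) - (a i : ℚ)))) := by
          ext j i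
          simp only [Matrix.map_apply, Matrix.add_apply, Matrix.smul_apply, Matrix.one_apply,
            Matrix.vecMulVec_apply, Pi.sub_apply, smul_eq_mul]
          push_cast
          by_cases hji : j = i <;> field_simp [hji] <;> ring
        have hdQ : (((((g : ℤ) • (1 : Matrix (Fin m) (Fin m) ℤ)
              + Matrix.vecMulVec u (c - a)).det : ℤ)) : ℚ)
            = (g : ℚ) ^ m * ((g : ℚ)⁻¹ * (s : ℚ)) := by
          have h0 := RingHom.map_det (Int.castRingHom ℚ)
            ((g : ℤ) • (1 : Matrix (Fin m) (Fin m) ℤ) + Matrix.vecMulVec u (c - a))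
          simp only [RingHom.mapMatrix_apply, Int.coe_castRingHom] at h0
          rw [h0, hmap, Matrix.det_smul,
            Matrix.vecMulVec_eq Unit, Matrix.det_one_add_replicateCol_mul_replicateRow]
          have hdot : (fun i => (g : ℚ)⁻¹ * ((c i : ℚ) - (a i : ℚ))) ⬝ᵥ (fun j => (u j : ℚ))
              = (g : ℚ)⁻¹ * ((s : ℚ) - (g : ℚ)) := by
            simp only [dotProduct]
            rw [show ∑ i, (g : ℚ)⁻¹ * ((c i : ℚ) - (a i : ℚ)) * (u i : ℚ)
                = (g : ℚ)⁻¹ * ((∑ i, (c i : ℚ) * (u i : ℚ)) - ∑ i, (a i : ℚ) * (u i : ℚ)) by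
              rw [← Finset.sum_sub_distrib, Finset.mul_sum]
              exact Finset.sum_congr rfl fun i _ => by ring]
            have h1 : (∑ i, (c i : ℚ) * (u i : ℚ)) = (s : ℚ) := by
              rw [hsdef]; push_cast; rfl
            have h2 : (∑ i, (a i : ℚ) * (u i : ℚ)) = (g : ℚ) := by
              rw [← hu]; push_cast; rfl
            rw [h1, h2]
          rw [hdot]
          have hgq : (g : ℚ) ≠ 0 := Int.cast_ne_zero.mpr hg
          field_simp
          rw [Fintype.card_fin]; ring
        intro h
        rw [h] at hdQ
        have hgq : (g : ℚ) ≠ 0 := Int.cast_ne_zero.mpr hg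
        have hsq : (s : ℚ) ≠ 0 := Int.cast_ne_zero.mpr hs
        have : (g : ℚ) ^ m * ((g : ℚ)⁻¹ * (s : ℚ)) ≠ 0 :=
          mul_ne_zero (pow_ne_zero _ hgq) (mul_ne_zero (inv_ne_zero hgq) hsq)
        exact this (by rw [← hdQ]; norm_num)
      · -- a ᵥ* Q = b
        funext i
        have h1 : (a ᵥ* ((g : ℤ) • (1 : Matrix (Fin m) (Fin m) ℤ)
            + Matrix.vecMulVec u (c - a))) i
            = ∑ j, a j * ((if j = i then g else 0) + u j * (c i - a i)) := by
          simp only [Matrix.vecMul, dotProduct, Matrix.add_apply, Matrix.smul_apply,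
            Matrix.one_apply, Matrix.vecMulVec_apply, Pi.sub_apply, smul_eq_mul, mul_ite,
            mul_one, mul_zero]
        rw [h1]
        have e : ∀ j, a j * ((if j = i then g else 0) + u j * (c i - a i))
            = (if j = i then g * a j else 0) + (a j * u j) * (c i - a i) := by
          intro j
          by_cases hj : j = i <;> simp [hj] <;> ring
        simp only [e, Finset.sum_add_distrib, Finset.sum_ite_eq' Finset.univ i,
          Finset.mem_univ, if_true, ← Finset.sum_mul, hu]
        rw [← hc i]; ring
end
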